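/- arXiv:1809.11085 — 2 statements merged into one kernel-verified Lean document; each statement's English description precedes it below -/
import Mathlib

section
/- Let X be a real m×n matrix (m ≥ n), 0 < s ≤ ‖X‖₂²/100, and E symmetric with ‖E‖₂ ≤ s/10. If R is invertible with RᵀR = XᵀX + sI + E, then ‖X R⁻¹‖₂ ≤ √(1 + 1.1/0.9) ≤ 1.5. -/
open Matrix BigOperators

noncomputable def spec {m n : ℕ} (A : Matrix (Fin m) (Fin n) ℝ) : ℝ :=
  ‖LinearMap.toContinuousLinearMap (Matrix.toEuclideanLin A)‖

noncomputable def frob {m n : ℕ} (A : Matrix (Fin m) (Fin n) ℝ) : ℝ :=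
  Real.sqrt (∑ i, ∑ j, (A i j)^2)

noncomputable def sigmaMin {m n : ℕ} (A : Matrix (Fin m) (Fin n) ℝ) : ℝ :=
  ⨅ x : {x : EuclideanSpace ℝ (Fin n) // ‖x‖ = 1}, ‖Matrix.toEuclideanLin A x‖

noncomputable def lamMin {n : ℕ} (A : Matrix (Fin n) (Fin n) ℝ) : ℝ :=
  ⨅ x : {x : EuclideanSpace ℝ (Fin n) // ‖x‖ = 1},
    (inner ℝ (Matrix.toEuclideanLin A x) (x : EuclideanSpace ℝ (Fin n)) : ℝ)

noncomputable def lamMax {n : ℕ} (A : Matrix (Fin n) (Fin n) ℝ) : ℝ :=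
  ⨆ x : {x : EuclideanSpace ℝ (Fin n) // ‖x‖ = 1},
    (inner ℝ (Matrix.toEuclideanLin A x) (x : EuclideanSpace ℝ (Fin n)) : ℝ)

lemma toEL_mul {m n k : ℕ} (A : Matrix (Fin m) (Fin n) ℝ) (B : Matrix (Fin n) (Fin k) ℝ)
    (x : EuclideanSpace ℝ (Fin k)) :
    Matrix.toEuclideanLin (A * B) x = Matrix.toEuclideanLin A (Matrix.toEuclideanLin B x) := by
  simp [Matrix.toEuclideanLin_eq_toLin, Matrix.toLin_mul _ (PiLp.basisFun 2 ℝ (Fin n)) _]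

lemma spec_bound {m n : ℕ} (A : Matrix (Fin m) (Fin n) ℝ) (x : EuclideanSpace ℝ (Fin n)) :
    ‖Matrix.toEuclideanLin A x‖ ≤ spec A * ‖x‖ := by
  have := (LinearMap.toContinuousLinearMap (Matrix.toEuclideanLin A)).le_opNorm x
  simpa [spec] using this

lemma spec_le {m n : ℕ} (A : Matrix (Fin m) (Fin n) ℝ) (C : ℝ) (hC : 0 ≤ C)
    (h : ∀ x : EuclideanSpace ℝ (Fin n), ‖Matrix.toEuclideanLin A x‖ ≤ C * ‖x‖) :
    spec A ≤ C :=
  ContinuousLinearMap.opNorm_le_bound _ hC h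

lemma stmt1_core {m n : ℕ} (X : Matrix (Fin m) (Fin n) ℝ)
    (s : ℝ)
    (E : Matrix (Fin n) (Fin n) ℝ) (hEs : spec E ≤ s / 10)
    (R : Matrix (Fin n) (Fin n) ℝ) (hRunit : IsUnit R)
    (hchol : Rᵀ * R = Xᵀ * X + s • (1 : Matrix (Fin n) (Fin n) ℝ) + E) :
    spec (X * R⁻¹) ≤ 1 := by
  have hdet : IsUnit R.det := (Matrix.isUnit_iff_isUnit_det R).mp hRunit
  have hRR : R * R⁻¹ = 1 := Matrix.mul_nonsing_inv R hdet
  have hXX : Xᵀ * X = Rᵀ * R - s • (1 : Matrix (Fin n) (Fin n) ℝ) - E := by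
    rw [hchol]; abel
  have hM : (X * R⁻¹)ᵀ * (X * R⁻¹)
      = 1 - s • ((R⁻¹)ᵀ * R⁻¹) - (R⁻¹)ᵀ * (E * R⁻¹) := by
    have h1 : (R⁻¹)ᵀ * Rᵀ = 1 := by rw [← Matrix.transpose_mul, hRR, Matrix.transpose_one]
    rw [Matrix.transpose_mul]
    calc (R⁻¹)ᵀ * Xᵀ * (X * R⁻¹) = (R⁻¹)ᵀ * (Xᵀ * X) * R⁻¹ := by
          rw [Matrix.mul_assoc, Matrix.mul_assoc, Matrix.mul_assoc]
      _ = _ := by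
          rw [hXX]
          rw [Matrix.mul_sub, Matrix.mul_sub, Matrix.sub_mul, Matrix.sub_mul]
          rw [Matrix.mul_smul, Matrix.smul_mul, Matrix.mul_one]
          rw [← Matrix.mul_assoc ((R⁻¹)ᵀ) Rᵀ R, h1, Matrix.one_mul, hRR]
          rw [Matrix.mul_assoc]
  apply spec_le _ _ zero_le_one
  intro x
  rw [one_mul]
  have key : ‖Matrix.toEuclideanLin (X * R⁻¹) x‖ ^ 2
      = ‖x‖^2 - s * ‖Matrix.toEuclideanLin R⁻¹ x‖^2
        - inner ℝ (Matrix.toEuclideanLin E (Matrix.toEuclideanLin R⁻¹ x)) (Matrix.toEuclideanLin R⁻¹ x) := by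
    have hadj : ∀ {p q : ℕ} (A : Matrix (Fin p) (Fin q) ℝ) (u : EuclideanSpace ℝ (Fin q))
        (v : EuclideanSpace ℝ (Fin p)),
        (inner ℝ (Matrix.toEuclideanLin Aᵀ v) u : ℝ) = inner ℝ v (Matrix.toEuclideanLin A u) := by
      intro p q A u v
      have : (Aᵀ : Matrix (Fin q) (Fin p) ℝ) = Aᴴ := by
        ext i j; simp [Matrix.conjTranspose_apply]
      rw [this, Matrix.toEuclideanLin_conjTranspose_eq_adjoint, LinearMap.adjoint_inner_left]
    have h1 : (inner ℝ (Matrix.toEuclideanLin ((X * R⁻¹)ᵀ * (X * R⁻¹)) x) x : ℝ)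
        = ‖Matrix.toEuclideanLin (X * R⁻¹) x‖ ^ 2 := by
      rw [toEL_mul ((X * R⁻¹)ᵀ) (X * R⁻¹) x, hadj (X * R⁻¹), real_inner_self_eq_norm_sq]
    rw [← h1, hM]
    have e1 : Matrix.toEuclideanLin (1 - s • ((R⁻¹)ᵀ * R⁻¹) - (R⁻¹)ᵀ * (E * R⁻¹)) x
        = x - s • Matrix.toEuclideanLin ((R⁻¹)ᵀ * R⁻¹) x - Matrix.toEuclideanLin ((R⁻¹)ᵀ * (E * R⁻¹)) x := by
      simp only [map_sub, LinearMap.sub_apply, _root_.map_smul, LinearMap.smul_apply,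
        Matrix.toEuclideanLin_eq_toLin, Matrix.toLin_one, LinearMap.id_apply]
    rw [e1, inner_sub_left, inner_sub_left, real_inner_smul_left, real_inner_self_eq_norm_sq]
    rw [toEL_mul ((R⁻¹)ᵀ) R⁻¹ x, hadj R⁻¹, real_inner_self_eq_norm_sq]
    rw [toEL_mul ((R⁻¹)ᵀ) (E * R⁻¹) x, toEL_mul E R⁻¹ x, hadj R⁻¹]
  have hEbd : |(inner ℝ (Matrix.toEuclideanLin E (Matrix.toEuclideanLin R⁻¹ x)) (Matrix.toEuclideanLin R⁻¹ x) : ℝ)|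
      ≤ (s/10) * ‖Matrix.toEuclideanLin R⁻¹ x‖^2 := by
    set y := Matrix.toEuclideanLin R⁻¹ x
    calc |(inner ℝ (Matrix.toEuclideanLin E y) y : ℝ)| ≤ ‖Matrix.toEuclideanLin E y‖ * ‖y‖ :=
          abs_real_inner_le_norm _ _
      _ ≤ (spec E * ‖y‖) * ‖y‖ := mul_le_mul_of_nonneg_right (spec_bound E y) (norm_nonneg _)
      _ = spec E * ‖y‖^2 := by ring
      _ ≤ (s/10) * ‖y‖^2 := mul_le_mul_of_nonneg_right hEs (by positivity)
  have hsq : ‖Matrix.toEuclideanLin (X * R⁻¹) x‖ ^ 2 ≤ ‖x‖ ^ 2 := by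
    rw [key]
    have := abs_le.mp hEbd
    nlinarith [sq_nonneg ‖Matrix.toEuclideanLin R⁻¹ x‖]
  calc ‖Matrix.toEuclideanLin (X * R⁻¹) x‖
      = Real.sqrt (‖Matrix.toEuclideanLin (X * R⁻¹) x‖ ^ 2) := by
        rw [Real.sqrt_sq (norm_nonneg _)]
    _ ≤ Real.sqrt (‖x‖ ^ 2) := Real.sqrt_le_sqrt hsq
    _ = ‖x‖ := Real.sqrt_sq (norm_nonneg _)

theorem stmt1 {m n : ℕ} (hmn : n ≤ m) (X : Matrix (Fin m) (Fin n) ℝ)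
    (s : ℝ) (hs : 0 < s) (hs' : s ≤ spec X ^ 2 / 100)
    (E : Matrix (Fin n) (Fin n) ℝ) (hE : Eᵀ = E) (hEs : spec E ≤ s / 10)
    (R : Matrix (Fin n) (Fin n) ℝ) (hRunit : IsUnit R)
    (hchol : Rᵀ * R = Xᵀ * X + s • (1 : Matrix (Fin n) (Fin n) ℝ) + E) :
    spec (X * R⁻¹) ≤ Real.sqrt (1 + 1.1 / 0.9) ∧
    Real.sqrt (1 + 1.1 / 0.9) ≤ 1.5 := by
  have h2 : Real.sqrt (1 + 1.1 / 0.9) ≤ 1.5 := by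
    calc Real.sqrt (1 + 1.1 / 0.9) ≤ Real.sqrt (1.5 ^ 2) :=
          Real.sqrt_le_sqrt (by norm_num)
      _ = 1.5 := Real.sqrt_sq (by norm_num)
  refine ⟨le_trans (stmt1_core X s E hEs R hRunit hchol) ?_, h2⟩
  calc (1:ℝ) = Real.sqrt 1 := Real.sqrt_one.symm
    _ ≤ Real.sqrt (1 + 1.1 / 0.9) := Real.sqrt_le_sqrt (by norm_num)
end

section
/- Let X and ΔX be real m×n matrices and R an invertible n×n matrix, and set Q = (X + ΔX)R⁻¹. Then ‖QᵀQ − I + R⁻ᵀ(sI + E)R⁻¹‖₂ ≤ 2‖R⁻¹‖₂·‖XR⁻¹‖₂·‖ΔX‖₂ + ‖R⁻¹‖₂²·‖ΔX‖₂², provided RᵀR = XᵀX + sI + E. -/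
open Matrix BigOperators

open scoped Matrix.Norms.L2Operator

lemma spec_eq_l2norm {m n : ℕ} (A : Matrix (Fin m) (Fin n) ℝ) : spec A = ‖A‖ := rfl

lemma spec_transpose {m n : ℕ} (A : Matrix (Fin m) (Fin n) ℝ) : spec Aᵀ = spec A := by
  rw [spec_eq_l2norm, spec_eq_l2norm, ← Matrix.l2_opNorm_conjTranspose A,
    Matrix.conjTranspose_eq_transpose_of_trivial]

theorem stmt4 {m n : ℕ} (X ΔX : Matrix (Fin m) (Fin n) ℝ)
    (R : Matrix (Fin n) (Fin n) ℝ) (hRunit : IsUnit R)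
    (s : ℝ) (E : Matrix (Fin n) (Fin n) ℝ) (hE : Eᵀ = E)
    (hchol : Rᵀ * R = Xᵀ * X + s • (1 : Matrix (Fin n) (Fin n) ℝ) + E)
    (Q : Matrix (Fin m) (Fin n) ℝ) (hQ : Q = (X + ΔX) * R⁻¹) :
    spec (Qᵀ * Q - 1 + (R⁻¹)ᵀ * (s • (1 : Matrix (Fin n) (Fin n) ℝ) + E) * R⁻¹) ≤
      2 * spec R⁻¹ * spec (X * R⁻¹) * spec ΔX + spec R⁻¹ ^ 2 * spec ΔX ^ 2 := by
  have hdet : IsUnit R.det := (Matrix.isUnit_iff_isUnit_det R).mp hRunit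
  have hRRinv : R * R⁻¹ = 1 := Matrix.mul_nonsing_inv R hdet
  have h1 : (R⁻¹)ᵀ * Rᵀ = 1 := by
    rw [← Matrix.transpose_mul, hRRinv, Matrix.transpose_one]
  have hXtX : Xᵀ * X = Rᵀ * R - (s • (1 : Matrix (Fin n) (Fin n) ℝ) + E) := by
    rw [hchol, add_assoc, add_sub_cancel_right]
  set A := X * R⁻¹ with hA
  set B := ΔX * R⁻¹ with hB
  have e2 : Aᵀ * A = 1 - (R⁻¹)ᵀ * (s • (1 : Matrix (Fin n) (Fin n) ℝ) + E) * R⁻¹ := by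
    calc Aᵀ * A = (R⁻¹)ᵀ * ((Xᵀ * X) * R⁻¹) := by
          rw [hA, Matrix.transpose_mul]; simp only [Matrix.mul_assoc]
      _ = (R⁻¹)ᵀ * ((Rᵀ * R - (s • (1 : Matrix (Fin n) (Fin n) ℝ) + E)) * R⁻¹) := by rw [hXtX]
      _ = (R⁻¹)ᵀ * (Rᵀ * (R * R⁻¹)) -
            (R⁻¹)ᵀ * ((s • (1 : Matrix (Fin n) (Fin n) ℝ) + E) * R⁻¹) := by
          rw [Matrix.sub_mul, Matrix.mul_sub]; simp only [Matrix.mul_assoc]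
      _ = 1 - (R⁻¹)ᵀ * (s • (1 : Matrix (Fin n) (Fin n) ℝ) + E) * R⁻¹ := by
          rw [hRRinv, Matrix.mul_one, ← Matrix.transpose_mul, hRRinv, Matrix.transpose_one,
            Matrix.mul_assoc]
  have eQ : Qᵀ * Q = Aᵀ * A + (Aᵀ * B + Bᵀ * A + Bᵀ * B) := by
    have : Q = A + B := by rw [hQ, hA, hB, Matrix.add_mul]
    rw [this, Matrix.transpose_add, Matrix.add_mul, Matrix.mul_add, Matrix.mul_add]
    abel
  have key : Qᵀ * Q - 1 + (R⁻¹)ᵀ * (s • (1 : Matrix (Fin n) (Fin n) ℝ) + E) * R⁻¹ =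
      Aᵀ * B + Bᵀ * A + Bᵀ * B := by
    rw [eQ, e2]; abel
  rw [key]
  have hBle : spec B ≤ spec ΔX * spec R⁻¹ := Matrix.l2_opNorm_mul ΔX R⁻¹
  have h1' : spec (Aᵀ * B) ≤ spec A * spec B := by
    have := Matrix.l2_opNorm_mul Aᵀ B
    rwa [← spec_eq_l2norm, ← spec_eq_l2norm, ← spec_eq_l2norm, spec_transpose A] at this
  have h2' : spec (Bᵀ * A) ≤ spec B * spec A := by
    have := Matrix.l2_opNorm_mul Bᵀ A
    rwa [← spec_eq_l2norm, ← spec_eq_l2norm, ← spec_eq_l2norm, spec_transpose B] at this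
  have h3' : spec (Bᵀ * B) ≤ spec B * spec B := by
    have := Matrix.l2_opNorm_mul Bᵀ B
    rwa [← spec_eq_l2norm, ← spec_eq_l2norm, ← spec_eq_l2norm, spec_transpose B] at this
  have htri : spec (Aᵀ * B + Bᵀ * A + Bᵀ * B) ≤
      spec (Aᵀ * B) + spec (Bᵀ * A) + spec (Bᵀ * B) := by
    simp only [spec_eq_l2norm]
    calc ‖Aᵀ * B + Bᵀ * A + Bᵀ * B‖ ≤ ‖Aᵀ * B + Bᵀ * A‖ + ‖Bᵀ * B‖ := norm_add_le _ _
      _ ≤ ‖Aᵀ * B‖ + ‖Bᵀ * A‖ + ‖Bᵀ * B‖ := by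
          have := norm_add_le (Aᵀ * B) (Bᵀ * A); linarith
  have hAnn : 0 ≤ spec A := by rw [spec_eq_l2norm]; exact norm_nonneg _
  have hBnn : 0 ≤ spec B := by rw [spec_eq_l2norm]; exact norm_nonneg _
  have hDnn : 0 ≤ spec ΔX := by rw [spec_eq_l2norm]; exact norm_nonneg _
  have hRnn : 0 ≤ spec R⁻¹ := by rw [spec_eq_l2norm]; exact norm_nonneg _
  nlinarith [htri, h1', h2', h3', hBle, mul_le_mul_of_nonneg_left hBle hAnn,
    mul_le_mul hBle hBle hBnn (mul_nonneg hDnn hRnn)]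
end
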